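/- In the group algebra of the weight lattice of osp(2,2n), suppose χ is an integral weight with (χ+ρ, ε+δ_j) = (χ+ρ, ε−δ_j) = 0 for some 1 ≤ j ≤ n. Then {K^{ε+δ_j}_χ} = −{K^{ε−δ_j}_{χ−ε+δ_j}}. -/

import Mathlib

/-- The integral weight lattice of `osp(2,2n)`: coefficients of `ε` and of `δ₁, …, δ_n`. -/
abbrev Wt (n : ℕ) : Type := ℤ × (Fin n → ℤ)

/-- The group algebra of the weight lattice over `ℂ`. -/
abbrev GA (n : ℕ) : Type := AddMonoidAlgebra ℂ (Wt n)

/-- `e^v` in the group algebra. -/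
noncomputable def eWt (n : ℕ) (v : Wt n) : GA n := AddMonoidAlgebra.single v 1

/-- The weight `ε`. -/
def eps (n : ℕ) : Wt n := (1, 0)

/-- The weight `δ_i` (indexing `δ_{i+1}` by `i : Fin n`). -/
def delta (n : ℕ) (i : Fin n) : Wt n := (0, fun r => if r = i then 1 else 0)

/-- `ρ₀ = Σ_{i=1}^n (n+1−i) δ_i`. -/
def rho0 (n : ℕ) : Wt n := (0, fun i => (n : ℤ) - (i : ℤ))

/-- `ρ = ρ₀ − ρ₁ = ρ₀ − n ε`. -/
def rho (n : ℕ) : Wt n := (-(n : ℤ), fun i => (n : ℤ) - (i : ℤ))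

/-- The pairing `(v, ε + δ_i)` for the form `(ε,ε)=1`, `(δ_i,δ_j)=−δ_{ij}`, `(ε,δ_i)=0`. -/
def pairPlus (n : ℕ) (v : Wt n) (i : Fin n) : ℤ := v.1 - v.2 i

/-- The pairing `(v, ε − δ_i)`. -/
def pairMinus (n : ℕ) (v : Wt n) (i : Fin n) : ℤ := v.1 + v.2 i

/-- The odd positive root attached to `(i, s)`: `ε + δ_i` if `s = true`, `ε − δ_i` otherwise. -/
def oddRoot (n : ℕ) (a : Fin n × Bool) : Wt n :=
  if a.2 then eps n + delta n a.1 else eps n - delta n a.1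

/-- The action of the Weyl group element `(σ, s) ∈ S_n ⋉ (ℤ/2)^n` on weights: it fixes `ε` and
permutes and changes signs of the `δ_i`. -/
def wAct (n : ℕ) (σ : Equiv.Perm (Fin n)) (s : Fin n → ℤˣ) (v : Wt n) : Wt n :=
  (v.1, fun i => (s i : ℤ) * v.2 (σ⁻¹ i))

/-- The alternation `{f} = Σ_{w ∈ W₀} sgn(w) · w(f)` over `W₀ = S_n ⋉ (ℤ/2)^n`. -/
noncomputable def alt (n : ℕ) (f : GA n) : GA n :=
  ∑ σ : Equiv.Perm (Fin n), ∑ s : Fin n → ℤˣ,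
    ((((Equiv.Perm.sign σ : ℤ) * ∏ i, (s i : ℤ) : ℤ) : ℂ)) •
      AddMonoidAlgebra.ofCoeff (Finsupp.mapDomain (wAct n σ s) f.coeff)

/-- `K^α_ν = e^{ν+ρ₀} Π_{β ∈ R₁⁺ \ {α}} (1 − e^{−β})`, with `α = oddRoot n a`. -/
noncomputable def Kal (n : ℕ) (χ : Wt n) (a : Fin n × Bool) : GA n :=
  eWt n (χ + rho0 n) *
    ∏ b ∈ (Finset.univ : Finset (Fin n × Bool)).erase a,
      (1 - eWt n (-(oddRoot n b)))

/-! ### Auxiliary lemmas -/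

/-- `wAct n σ s` as an additive homomorphism. -/
def wHom (n : ℕ) (σ : Equiv.Perm (Fin n)) (s : Fin n → ℤˣ) : Wt n →+ Wt n where
  toFun := wAct n σ s
  map_zero' := by
    simp [wAct, Prod.ext_iff]
    rfl
  map_add' := fun u v => by
    simp [wAct, Prod.ext_iff, funext_iff, mul_add]

lemma eWt_mul (n : ℕ) (u v : Wt n) : eWt n u * eWt n v = eWt n (u + v) := by
  simp [eWt, AddMonoidAlgebra.single_mul_single]

lemma finset_erase_comm {α : Type*} [DecidableEq α] (s : Finset α) (a b : α) :
    (s.erase a).erase b = (s.erase b).erase a := by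
  ext x; simp [and_left_comm]

lemma alt_add (n : ℕ) (x y : GA n) : alt n (x + y) = alt n x + alt n y := by
  unfold alt
  rw [← Finset.sum_add_distrib]
  refine Finset.sum_congr rfl fun σ _ => ?_
  rw [← Finset.sum_add_distrib]
  refine Finset.sum_congr rfl fun s _ => ?_
  rw [← smul_add, AddMonoidAlgebra.coeff_add, Finsupp.mapDomain_add, AddMonoidAlgebra.ofCoeff_add]

/-- The sign-flip at `j`. -/
def sflip (n : ℕ) (j : Fin n) : Fin n → ℤˣ := fun i => if i = j then -1 else 1

lemma sflip_prod (n : ℕ) (j : Fin n) : (∏ i, ((sflip n j i : ℤˣ) : ℤ)) = -1 := by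
  have : ∀ i, ((sflip n j i : ℤˣ) : ℤ) = if i = j then (-1 : ℤ) else 1 := by
    intro i; simp [sflip, apply_ite]
  simp only [this]
  rw [Finset.prod_ite_eq' Finset.univ j (fun _ => (-1 : ℤ))]
  simp

lemma wAct_comp_sflip (n : ℕ) (j : Fin n) (σ : Equiv.Perm (Fin n)) (s : Fin n → ℤˣ) :
    wAct n σ s ∘ wAct n 1 (sflip n j) = wAct n σ (fun i => s i * sflip n j (σ⁻¹ i)) := by
  funext v
  simp [wAct, Prod.ext_iff, funext_iff, mul_assoc]

/-- If `f` is fixed by the sign-flip at `j`, its alternation vanishes. -/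
lemma alt_eq_zero_of_flip (n : ℕ) (j : Fin n) (f : GA n)
    (hf : AddMonoidAlgebra.ofCoeff (Finsupp.mapDomain (wAct n 1 (sflip n j)) f.coeff) = f) :
    alt n f = 0 := by
  classical
  have key : alt n f = - alt n f := by
    unfold alt
    rw [← Finset.sum_neg_distrib]
    refine Finset.sum_congr rfl fun σ _ => ?_
    have step1 : ∀ s : Fin n → ℤˣ,
        AddMonoidAlgebra.ofCoeff (Finsupp.mapDomain (wAct n σ s) f.coeff)
          = AddMonoidAlgebra.ofCoeff (Finsupp.mapDomain (wAct n σ (fun i => s i * sflip n j (σ⁻¹ i))) f.coeff) := by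
      intro s
      conv_lhs => rw [← hf]
      rw [AddMonoidAlgebra.coeff_ofCoeff, ← Finsupp.mapDomain_comp, wAct_comp_sflip]
    have coeff : ∀ s : Fin n → ℤˣ,
        (∏ i, ((s i * sflip n j (σ⁻¹ i) : ℤˣ) : ℤ)) = - ∏ i, ((s i : ℤˣ) : ℤ) := by
      intro s
      simp only [Units.val_mul, Finset.prod_mul_distrib]
      have : (∏ i, ((sflip n j (σ⁻¹ i) : ℤˣ) : ℤ)) = -1 := by
        rw [Equiv.prod_comp σ⁻¹ (fun i => ((sflip n j i : ℤˣ) : ℤ))]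
        exact sflip_prod n j
      rw [this]; ring
    set e : (Fin n → ℤˣ) ≃ (Fin n → ℤˣ) :=
      Equiv.mulRight (fun i => sflip n j (σ⁻¹ i)) with he
    have heapp : ∀ (s : Fin n → ℤˣ) (i : Fin n), e s i = s i * sflip n j (σ⁻¹ i) := by
      intro s i; simp [he]
    calc
      ∑ s : Fin n → ℤˣ,
          ((((Equiv.Perm.sign σ : ℤ) * ∏ i, (s i : ℤ) : ℤ) : ℂ)) •
            AddMonoidAlgebra.ofCoeff (Finsupp.mapDomain (wAct n σ s) f.coeff)
        = ∑ s : Fin n → ℤˣ,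
          (-((((Equiv.Perm.sign σ : ℤ) * ∏ i, ((e s) i : ℤ) : ℤ) : ℂ))) •
            AddMonoidAlgebra.ofCoeff (Finsupp.mapDomain (wAct n σ (e s)) f.coeff) := by
          refine Finset.sum_congr rfl fun s _ => ?_
          have hes : e s = fun i => s i * sflip n j (σ⁻¹ i) := funext fun i => heapp s i
          rw [hes, coeff s, ← step1 s]
          push_cast
          try ring_nf
      _ = - ∑ s : Fin n → ℤˣ,
          ((((Equiv.Perm.sign σ : ℤ) * ∏ i, ((e s) i : ℤ) : ℤ) : ℂ)) •
            AddMonoidAlgebra.ofCoeff (Finsupp.mapDomain (wAct n σ (e s)) f.coeff) := by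
          rw [← Finset.sum_neg_distrib]
          exact Finset.sum_congr rfl fun s _ => by rw [neg_smul]
      _ = - ∑ s : Fin n → ℤˣ,
          ((((Equiv.Perm.sign σ : ℤ) * ∏ i, (s i : ℤ) : ℤ) : ℂ)) •
            AddMonoidAlgebra.ofCoeff (Finsupp.mapDomain (wAct n σ s) f.coeff) := by
          congr 1
          exact Fintype.sum_equiv e _ _ (fun s => rfl)
  have h2 : (2 : ℂ) • alt n f = 0 := by
    rw [two_smul]
    nth_rewrite 1 [key]
    simp
  rcases smul_eq_zero.mp h2 with h | h
  · exact absurd h two_ne_zero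
  · exact h

lemma wAct_fix (n : ℕ) (j : Fin n) (v : Wt n) (hv : v.2 j = 0) :
    wAct n 1 (sflip n j) v = v := by
  refine Prod.ext rfl (funext fun i => ?_)
  show ((sflip n j i : ℤˣ) : ℤ) * v.2 ((1 : Equiv.Perm (Fin n))⁻¹ i) = v.2 i
  have : (1 : Equiv.Perm (Fin n))⁻¹ i = i := rfl
  rw [this]
  by_cases h : i = j
  · subst h; simp [sflip, hv]
  · simp [sflip, h]

/-- If `(χ+ρ, ε+δ_j) = (χ+ρ, ε−δ_j) = 0` then `{K^{ε+δ_j}_χ} = −{K^{ε−δ_j}_{χ−ε+δ_j}}`. -/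
theorem alt_Kal_reflect (n : ℕ) (χ : Wt n) (j : Fin n)
    (h1 : pairPlus n (χ + rho n) j = 0)
    (h2 : pairMinus n (χ + rho n) j = 0) :
    alt n (Kal n χ (j, true)) = - alt n (Kal n (χ - eps n + delta n j) (j, false)) := by
  classical
  set μ : Wt n := χ + rho0 n with hμ
  set μ' : Wt n := (χ - eps n + delta n j) + rho0 n with hμ'
  have hμj : μ.2 j = 0 := by
    have e1 : (χ.1 + -(n : ℤ)) - (χ.2 j + ((n : ℤ) - (j : ℤ))) = 0 := by
      simpa [pairPlus, rho, Prod.fst_add, Prod.snd_add] using h1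
    have e2 : (χ.1 + -(n : ℤ)) + (χ.2 j + ((n : ℤ) - (j : ℤ))) = 0 := by
      simpa [pairMinus, rho, Prod.fst_add, Prod.snd_add] using h2
    have : χ.2 j + ((n : ℤ) - (j : ℤ)) = 0 := by omega
    simpa [hμ, rho0, Prod.snd_add] using this
  -- the common product over roots not involving δⱼ
  set T : Finset (Fin n × Bool) :=
    ((Finset.univ : Finset (Fin n × Bool)).erase (j, true)).erase (j, false) with hT
  set Q : GA n := ∏ b ∈ T, (1 - eWt n (-(oddRoot n b))) with hQ
  -- the sum of the two Kal's
  have hsum : Kal n χ (j, true) + Kal n (χ - eps n + delta n j) (j, false)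
      = (eWt n μ - eWt n (μ - eps n - eps n)) * Q := by
    have hmem1 : (j, false) ∈ (Finset.univ : Finset (Fin n × Bool)).erase (j, true) := by
      simp
    have hmem2 : (j, true) ∈ (Finset.univ : Finset (Fin n × Bool)).erase (j, false) := by
      simp
    rw [Kal, Kal, ← Finset.mul_prod_erase _ _ hmem1, ← Finset.mul_prod_erase _ _ hmem2,
      finset_erase_comm ((Finset.univ : Finset (Fin n × Bool))) (j, false) (j, true)]
    have hofalse : oddRoot n ((j : Fin n), false) = eps n - delta n j := by
      simp [oddRoot]
    have hotrue : oddRoot n ((j : Fin n), true) = eps n + delta n j := by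
      simp [oddRoot]
    rw [hofalse, hotrue, ← hT, ← hQ, ← hμ, ← hμ']
    have e1 : eWt n μ * eWt n (-(eps n - delta n j)) = eWt n μ' := by
      rw [eWt_mul]; congr 1; rw [hμ, hμ']; abel
    have e2 : eWt n μ' * eWt n (-(eps n + delta n j)) = eWt n (μ - eps n - eps n) := by
      rw [eWt_mul]; congr 1; rw [hμ, hμ']; abel
    linear_combination (-Q) * e1 - Q * e2
  -- the sum is invariant under the sign flip at j
  have hinv : AddMonoidAlgebra.ofCoeff (Finsupp.mapDomain (wAct n 1 (sflip n j))
      ((eWt n μ - eWt n (μ - eps n - eps n)) * Q).coeff) =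
      (eWt n μ - eWt n (μ - eps n - eps n)) * Q := by
    have hΦ : ∀ x : GA n,
        (AddMonoidAlgebra.mapDomainRingHom ℂ (wHom n 1 (sflip n j))) x
          = AddMonoidAlgebra.ofCoeff (Finsupp.mapDomain (wAct n 1 (sflip n j)) x.coeff) := fun x => rfl
    rw [← hΦ]
    have hsingle : ∀ v : Wt n, v.2 j = 0 →
        (AddMonoidAlgebra.mapDomainRingHom ℂ (wHom n 1 (sflip n j))) (eWt n v) = eWt n v := by
      intro v hv
      rw [hΦ]
      show AddMonoidAlgebra.ofCoeff (Finsupp.mapDomain (wAct n 1 (sflip n j)) (Finsupp.single v (1 : ℂ))) = _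
      rw [Finsupp.mapDomain_single, wAct_fix n j v hv]
      rfl
    rw [map_mul, map_sub, hsingle μ hμj, hsingle (μ - eps n - eps n) (by
      have : (μ - eps n - eps n).2 j = μ.2 j - (eps n).2 j - (eps n).2 j := rfl
      rw [this, hμj]; simp [eps])]
    congr 1
    rw [hQ, map_prod]
    refine Finset.prod_congr rfl fun b hb => ?_
    have hbj : b.1 ≠ j := by
      rcases b with ⟨i, c⟩
      simp only [hT, Finset.mem_erase] at hb
      intro hij
      simp only at hij
      subst hij
      rcases c with _ | _
      · exact hb.1 rfl
      · exact hb.2.1 rfl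
    have hroot : (-(oddRoot n b)).2 j = 0 := by
      have : (delta n b.1).2 j = 0 := by
        simp [delta, (Ne.symm hbj)]
      rcases b with ⟨i, c⟩
      rcases c with _ | _ <;>
        simp_all [oddRoot, eps, delta, Prod.snd_add]
    rw [map_sub, map_one, hsingle _ hroot]
  -- conclude
  have hzero : alt n (Kal n χ (j, true)) + alt n (Kal n (χ - eps n + delta n j) (j, false)) = 0 := by
    rw [← alt_add, hsum]
    exact alt_eq_zero_of_flip n j _ hinv
  exact eq_neg_of_add_eq_zero_left hzero
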